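/- Fix an integer k ≥ 1 and let δ = (1, 1, …, 1) be the all-ones sequence of length k. There exists a constant c > 0 such that for every integer n ≥ 2(k+1) there exists a finite set P ⊆ ℝ⁴ with |P| ≤ n whose number of k-chains with respect to δ is at least c · n^{k+1}. -/

import Mathlib

/-- The number of `k`-chains with respect to `δ` with `i`-th point in `P i`:
`(k+1)`-tuples of pairwise distinct points with consecutive distances `δ i`. -/
noncomputable def chainCount (d k : ℕ) (δ : Fin k → ℝ)
    (P : Fin (k + 1) → Set (EuclideanSpace ℝ (Fin d))) : ℕ :=
  Set.ncard {p : Fin (k + 1) → EuclideanSpace ℝ (Fin d) |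
    Function.Injective p ∧ (∀ i, p i ∈ P i) ∧
    ∀ i : Fin k, dist (p i.castSucc) (p i.succ) = δ i}


noncomputable def uval (m : ℕ) (j : Fin m) : ℝ := (j : ℝ) / (2 * m)
noncomputable def vval (m : ℕ) (j : Fin m) : ℝ := Real.sqrt (1/2 - uval m j ^ 2)

lemma uval_mem (m : ℕ) (j : Fin m) : 0 ≤ uval m j ∧ uval m j < 1/2 := by
  have hm : (0:ℝ) < m := by exact_mod_cast j.pos
  constructor
  · exact div_nonneg (by positivity) (by positivity)
  · rw [uval, div_lt_iff₀ (by positivity)]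
    have : (j : ℝ) < m := by exact_mod_cast j.isLt
    nlinarith

lemma sq_bound (m : ℕ) (j : Fin m) : uval m j ^ 2 < 1/2 := by
  obtain ⟨h0, h1⟩ := uval_mem m j
  nlinarith

lemma vval_pos (m : ℕ) (j : Fin m) : 0 < vval m j :=
  Real.sqrt_pos.2 (by linarith [sq_bound m j])

lemma uv_sq (m : ℕ) (j : Fin m) : uval m j ^ 2 + vval m j ^ 2 = 1/2 := by
  rw [vval, Real.sq_sqrt (by linarith [sq_bound m j])]; ring

lemma uval_inj (m : ℕ) : Function.Injective (uval m) := by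
  intro i j h
  have hm : (0:ℝ) < m := by exact_mod_cast i.pos
  have : (i:ℝ) = j := by
    rw [uval, uval, div_left_inj' (mul_pos two_pos hm).ne'] at h; exact_mod_cast h
  exact Fin.ext (by exact_mod_cast this)

noncomputable def ptA (m : ℕ) (j : Fin m) : EuclideanSpace ℝ (Fin 4) :=
  (WithLp.equiv 2 (Fin 4 → ℝ)).symm ![uval m j, vval m j, 0, 0]
noncomputable def ptB (m : ℕ) (j : Fin m) : EuclideanSpace ℝ (Fin 4) :=
  (WithLp.equiv 2 (Fin 4 → ℝ)).symm ![0, 0, uval m j, vval m j]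

lemma dist_AB (m : ℕ) (i j : Fin m) : dist (ptA m i) (ptB m j) = 1 := by
  rw [EuclideanSpace.dist_eq]
  simp only [Real.dist_eq, sq_abs]
  have : ∑ l, (ptA m i l - ptB m j l) ^ 2 = 1 := by
    simp [ptA, ptB, Fin.sum_univ_four]
    have := uv_sq m i; have := uv_sq m j
    nlinarith
  rw [this, Real.sqrt_one]

lemma ptA_inj (m : ℕ) : Function.Injective (ptA m) := by
  intro i j h
  have := congrFun (congrArg (WithLp.equiv 2 (Fin 4 → ℝ)) h) 0
  simp [ptA] at this
  exact uval_inj m this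

lemma ptB_inj (m : ℕ) : Function.Injective (ptB m) := by
  intro i j h
  have := congrFun (congrArg (WithLp.equiv 2 (Fin 4 → ℝ)) h) 2
  simp [ptB] at this
  exact uval_inj m this

lemma ptA_ne_ptB (m : ℕ) (i j : Fin m) : ptA m i ≠ ptB m j := by
  intro h
  have := congrFun (congrArg (WithLp.equiv 2 (Fin 4 → ℝ)) h) 1
  simp [ptA, ptB] at this
  exact absurd this (ne_of_gt (vval_pos m i))

theorem stmt_12 (k : ℕ) (hk : 1 ≤ k) :
    ∃ c > (0 : ℝ), ∀ n : ℕ, 2 * (k + 1) ≤ n →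
      ∃ P : Finset (EuclideanSpace ℝ (Fin 4)), P.card ≤ n ∧
        c * (n : ℝ) ^ (k + 1 : ℕ) ≤
          (chainCount 4 k (fun _ => 1)
            (fun _ => (P : Set (EuclideanSpace ℝ (Fin 4)))) : ℝ) := by
  classical
  refine ⟨(1 / (4 * ((k : ℝ) + 1))) ^ (k + 1), by positivity, ?_⟩
  intro n hn
  set m := n / 2 with hm
  have hmk : k + 1 ≤ m := by omega
  set P : Finset (EuclideanSpace ℝ (Fin 4)) :=
    (Finset.univ.image (ptA m)) ∪ (Finset.univ.image (ptB m)) with hP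
  refine ⟨P, ?_, ?_⟩
  · calc P.card ≤ (Finset.univ.image (ptA m)).card + (Finset.univ.image (ptB m)).card :=
          Finset.card_union_le _ _
      _ ≤ m + m := by
          have h1 : (Finset.univ.image (ptA m)).card ≤ m :=
            le_trans Finset.card_image_le (by simp)
          have h2 : (Finset.univ.image (ptB m)).card ≤ m :=
            le_trans Finset.card_image_le (by simp)
          omega
      _ ≤ n := by omega
  · -- counting
    set S : Set (Fin (k + 1) → EuclideanSpace ℝ (Fin 4)) :=
      {p : Fin (k + 1) → EuclideanSpace ℝ (Fin 4) |
        Function.Injective p ∧ (∀ i, p i ∈ (P : Set (EuclideanSpace ℝ (Fin 4)))) ∧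
        ∀ i : Fin k, dist (p i.castSucc) (p i.succ) = (fun _ : Fin k => (1:ℝ)) i} with hS
    have hCC : chainCount 4 k (fun _ => 1)
        (fun _ => (P : Set (EuclideanSpace ℝ (Fin 4)))) = S.ncard := rfl
    have hfin : S.Finite := by
      apply Set.Finite.subset (Set.Finite.pi
        (fun _ : Fin (k+1) => P.finite_toSet))
      intro p hp
      simp only [Set.mem_pi, Set.mem_univ, forall_true_left]
      exact fun i => hp.2.1 i
    set Φ : (Fin (k + 1) ↪ Fin m) → (Fin (k + 1) → EuclideanSpace ℝ (Fin 4)) :=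
      fun σ i => if (i : ℕ) % 2 = 0 then ptA m (σ i) else ptB m (σ i) with hΦ
    have hrange : ∀ σ, Φ σ ∈ S := by
      intro σ
      refine ⟨?_, ?_, ?_⟩
      · intro i j hij
        by_cases h1 : (i : ℕ) % 2 = 0 <;> by_cases h2 : (j : ℕ) % 2 = 0 <;>
          simp only [hΦ, h1, h2, if_true, if_false, if_pos, if_neg, ite_true, ite_false] at hij
        · exact σ.injective (ptA_inj m hij)
        · exact absurd hij (ptA_ne_ptB m _ _)
        · exact absurd hij.symm (ptA_ne_ptB m _ _)
        · exact σ.injective (ptB_inj m hij)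
      · intro i
        by_cases h1 : (i : ℕ) % 2 = 0 <;>
          simp only [hΦ, h1, ite_true, ite_false, if_pos, if_neg, not_false_iff]
        · exact Finset.mem_union_left _ (Finset.mem_image.2 ⟨σ i, Finset.mem_univ _, rfl⟩)
        · exact Finset.mem_union_right _ (Finset.mem_image.2 ⟨σ i, Finset.mem_univ _, rfl⟩)
      · intro i
        have hc : ((i.castSucc : Fin (k+1)) : ℕ) = (i : ℕ) := rfl
        have hs : ((i.succ : Fin (k+1)) : ℕ) = (i : ℕ) + 1 := rfl
        by_cases h1 : (i : ℕ) % 2 = 0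
        · have h2 : ((i : ℕ) + 1) % 2 ≠ 0 := by omega
          simp only [hΦ, hc, hs, h1, h2, ite_true, ite_false, if_pos, if_neg, not_false_iff]
          exact dist_AB m _ _
        · have h2 : ((i : ℕ) + 1) % 2 = 0 := by omega
          simp only [hΦ, hc, hs, h1, h2, ite_true, ite_false, if_pos, if_neg, not_false_iff]
          rw [dist_comm]
          exact dist_AB m _ _
    have hΦinj : Function.Injective Φ := by
      intro σ τ h
      apply Function.Embedding.ext
      intro i
      have hi := congrFun h i
      by_cases h1 : (i : ℕ) % 2 = 0 <;>
        simp only [hΦ, h1, ite_true, ite_false, if_pos, if_neg, not_false_iff] at hi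
      · exact ptA_inj m hi
      · exact ptB_inj m hi
    have hcard : m.descFactorial (k + 1) ≤ S.ncard := by
      have h1 : (Set.range Φ).ncard ≤ S.ncard :=
        Set.ncard_le_ncard (Set.range_subset_iff.2 hrange) hfin
      have h2 : (Set.range Φ).ncard = m.descFactorial (k + 1) := by
        rw [← Set.image_univ, Set.ncard_image_of_injective _ hΦinj, Set.ncard_univ,
          Nat.card_eq_fintype_card, Fintype.card_embedding_eq, Fintype.card_fin,
          Fintype.card_fin]
      omega
    rw [hCC]
    have hdesc : ((m - k : ℕ) : ℝ) ^ (k + 1) ≤ (S.ncard : ℝ) := by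
      have := Nat.pow_sub_le_descFactorial m (k + 1)
      have h3 : m + 1 - (k + 1) = m - k := by omega
      rw [h3] at this
      exact_mod_cast le_trans this hcard
    refine le_trans ?_ hdesc
    have hcast : ((m - k : ℕ) : ℝ) = (m : ℝ) - k := by
      push_cast [Nat.cast_sub (by omega : k ≤ m)]; ring
    rw [hcast, ← mul_pow]
    apply pow_le_pow_left₀ (by positivity)
    have hmk' : (k : ℝ) + 1 ≤ (m : ℝ) := by exact_mod_cast hmk
    have h2m : (n : ℝ) ≤ 2 * (m : ℝ) + 1 := by
      have : n ≤ 2 * m + 1 := by omega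
      exact_mod_cast this
    have hk' : (1 : ℝ) ≤ (k : ℝ) := by exact_mod_cast hk
    rw [div_mul_eq_mul_div, one_mul, div_le_iff₀ (by positivity)]
    nlinarith [mul_nonneg (by linarith : (0:ℝ) ≤ (k:ℝ)) (by linarith : (0:ℝ) ≤ (m:ℝ) - k - 1)]
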